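/- Let G be a finite connected simple graph and v a vertex of G. In the game Trap (players alternately move a token along edges to previously unvisited vertices; a player who cannot move loses), the first player has a winning strategy starting from v if and only if v is contained in every maximum-cardinality matching of G. -/

import Mathlib

/-!
Trap: players alternately move a token along edges of `G` to previously
unvisited vertices (restricted to an allowed set `A`); a player who cannot
move loses.  The history is a list of visited vertices, newest first.
The first player moves at histories of odd length.
-/

variable {V : Type*}

/-- A move to `w` is legal from history `h` if `w` is adjacent to the current
vertex (the head of `h`), has not been visited, and is allowed. -/
def TrapLegal (G : SimpleGraph V) (A : Set V) (h : List V) (w : V) : Prop :=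
  ∃ c, h.head? = some c ∧ G.Adj c w ∧ w ∉ h ∧ w ∈ A

open Classical in
/-- The evolution of the game when the first player uses strategy `σ` and the
second player uses strategy `τ`, starting from `v`.  If the strategy of the
player to move chooses an illegal move, the history freezes. -/
noncomputable def trapPlay (G : SimpleGraph V) (A : Set V) (σ τ : List V → V) (v : V) :
    ℕ → List V
  | 0 => [v]
  | n + 1 =>
    let h := trapPlay G A σ τ v n
    let w := if h.length % 2 = 1 then σ h else τ h
    if TrapLegal G A h w then w :: h else h

/-- The first player has a winning strategy: a strategy `σ` such that against any
strategy `τ` of the second player, at some point it is the second player's turn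
(the history has even length) and the second player has no legal move to make
(in particular, the move suggested by `τ` is not legal). -/
def TrapFirstWins (G : SimpleGraph V) (A : Set V) (v : V) : Prop :=
  ∃ σ : List V → V, ∀ τ : List V → V, ∃ n : ℕ,
    (trapPlay G A σ τ v n).length % 2 = 0 ∧
    ¬ TrapLegal G A (trapPlay G A σ τ v n) (τ (trapPlay G A σ τ v n))

/-- `M` is a maximum-cardinality matching of `G`. -/
def IsMaxMatching (G : SimpleGraph V) (M : G.Subgraph) : Prop :=
  M.IsMatching ∧ ∀ N : G.Subgraph, N.IsMatching → N.verts.ncard ≤ M.verts.ncard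


section Aux

variable {G : SimpleGraph V}


variable {V : Type*} {G : SimpleGraph V}

open SimpleGraph

open Classical in
/-- Partner function of a matching. -/
noncomputable def mpart (M : G.Subgraph) (u : V) : V :=
  if h : ∃ w, M.Adj u w then h.choose else u

lemma mpart_eq {M : G.Subgraph} (hM : M.IsMatching) {u w : V} (h : M.Adj u w) :
    mpart M u = w := by
  have he : ∃ x, M.Adj u x := ⟨w, h⟩
  have hu : u ∈ M.verts := M.edge_vert h
  obtain ⟨x, hx, hun⟩ := hM hu
  rw [mpart, dif_pos he]
  
  rw [hun _ he.choose_spec, hun _ h]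

lemma mpart_adj {M : G.Subgraph} (hM : M.IsMatching) {u : V} (hu : u ∈ M.verts) :
    M.Adj u (mpart M u) := by
  obtain ⟨w, hw, _⟩ := hM hu
  rwa [mpart_eq hM hw]

lemma mpart_mem {M : G.Subgraph} (hM : M.IsMatching) {u : V} (hu : u ∈ M.verts) :
    mpart M u ∈ M.verts := M.edge_vert (mpart_adj hM hu).symm

lemma mpart_invol {M : G.Subgraph} (hM : M.IsMatching) {u : V} (hu : u ∈ M.verts) :
    mpart M (mpart M u) = u := mpart_eq hM (mpart_adj hM hu).symm

/-- Build a matching from an involution. -/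
lemma exists_matching_of_involution (S : Set V) (f : V → V)
    (hmem : ∀ u ∈ S, f u ∈ S) (hinv : ∀ u ∈ S, f (f u) = u)
    (hadj : ∀ u ∈ S, G.Adj u (f u)) :
    ∃ M : G.Subgraph, M.IsMatching ∧ M.verts = S := by
  refine ⟨⟨S, fun a b => (a ∈ S ∧ f a = b) ∨ (b ∈ S ∧ f b = a), ?_, ?_, ?_⟩, ?_, rfl⟩
  · rintro a b (⟨ha, rfl⟩ | ⟨hb, rfl⟩)
    · exact hadj a ha
    · exact (hadj b hb).symm
  · rintro a b (⟨ha, rfl⟩ | ⟨hb, rfl⟩)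
    · exact ha
    · exact hmem b hb
  · constructor
    rintro a b (⟨ha, rfl⟩ | ⟨hb, rfl⟩)
    · exact Or.inr ⟨ha, rfl⟩
    · exact Or.inl ⟨hb, rfl⟩
  · intro u hu
    refine ⟨f u, Or.inl ⟨hu, rfl⟩, ?_⟩
    rintro y (⟨_, rfl⟩ | ⟨hy, rfl⟩)
    · rfl
    · exact (hinv y hy).symm


lemma exists_maxMatching [Fintype V] (G : SimpleGraph V) :
    ∃ M : G.Subgraph, IsMaxMatching G M := by
  classical
  set s : Set ℕ := {n | ∃ N : G.Subgraph, N.IsMatching ∧ N.verts.ncard = n} with hs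
  have h0 : 0 ∈ s := by
    refine ⟨⊥, ?_, by simp⟩
    intro u hu
    simp [SimpleGraph.Subgraph.verts_bot] at hu
  have hbdd : BddAbove s := by
    refine ⟨Fintype.card V, ?_⟩
    rintro n ⟨N, _, rfl⟩
    calc N.verts.ncard ≤ (Set.univ : Set V).ncard :=
          Set.ncard_le_ncard (Set.subset_univ _) (Set.toFinite _)
      _ = Fintype.card V := by simp [Set.ncard_univ, Nat.card_eq_fintype_card]
  have hmem : sSup s ∈ s := Nat.sSup_mem ⟨0, h0⟩ hbdd
  obtain ⟨M, hM, hcard⟩ := hmem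
  exact ⟨M, hM, fun N hN => hcard ▸ le_csSup hbdd ⟨N, hN, rfl⟩⟩

section Swap

variable {M : G.Subgraph} {p : ℕ → V} {k : ℕ}

open Classical in
/-- Swap along an alternating path with `M`-edges at even positions, whose
far end `p k` is unmatched: yields a matching missing `p 0` instead of `p k`. -/
lemma swapB (hM : M.IsMatching) (hk : k % 2 = 0) (hk0 : k ≠ 0)
    (hinj : ∀ i ≤ k, ∀ j ≤ k, p i = p j → i = j)
    (hadj : ∀ i < k, G.Adj (p i) (p (i + 1)))
    (hMadj : ∀ i < k, i % 2 = 0 → M.Adj (p i) (p (i + 1)))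
    (hu : p k ∉ M.verts) :
    ∃ M' : G.Subgraph, M'.IsMatching ∧ M'.verts = insert (p k) (M.verts \ {p 0}) := by
  have hk2 : 2 ≤ k := by omega
  have pmem : ∀ j < k, p j ∈ M.verts := by
    intro j hj
    by_cases hje : j % 2 = 0
    · exact M.edge_vert (hMadj j hj hje)
    · have hj1 : j - 1 < k := by omega
      have := hMadj (j - 1) hj1 (by omega)
      rw [show j - 1 + 1 = j by omega] at this
      exact M.edge_vert this.symm
  have ppart : ∀ j < k, mpart M (p j) = if j % 2 = 0 then p (j + 1) else p (j - 1) := by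
    intro j hj
    by_cases hje : j % 2 = 0
    · rw [if_pos hje]
      exact mpart_eq hM (hMadj j hj hje)
    · rw [if_neg hje]
      have hj1 : j - 1 < k := by omega
      have := hMadj (j - 1) hj1 (by omega)
      rw [show j - 1 + 1 = j by omega] at this
      exact mpart_eq hM this.symm
  set onP : V → Prop := fun x => ∃ j, j ≤ k ∧ p j = x with honP
  set f : V → V := fun x =>
    if hx : onP x then
      (if hx.choose = 0 then x else
        if hx.choose % 2 = 1 then p (hx.choose + 1) else p (hx.choose - 1))
    else mpart M x with hf
  have f_on : ∀ j ≤ k, f (p j) =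
      if j = 0 then p j else if j % 2 = 1 then p (j + 1) else p (j - 1) := by
    intro j hj
    have hx : onP (p j) := ⟨j, hj, rfl⟩
    have hj' : hx.choose = j := hinj _ hx.choose_spec.1 _ hj hx.choose_spec.2
    simp only [hf, dif_pos hx, hj']
  have f_off : ∀ x, ¬ onP x → f x = mpart M x := by
    intro x hx
    simp only [hf, dif_neg hx]
  have off_part : ∀ x, ¬ onP x → x ∈ M.verts → ¬ onP (mpart M x) := by
    rintro x hx hxm ⟨j, hj, hj'⟩
    have hjk : j < k := by
      rcases eq_or_lt_of_le hj with rfl | h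
      · exact absurd (hj' ▸ mpart_mem hM hxm) hu
      · exact h
    apply hx
    refine ⟨if j % 2 = 0 then j + 1 else j - 1, ?_, ?_⟩
    · split <;> omega
    · have : mpart M (p j) = x := by rw [hj', mpart_invol hM hxm]
      rw [ppart j hjk] at this
      split <;> rename_i hpar
      · rwa [if_pos hpar] at this
      · rwa [if_neg hpar] at this
  have key : ∀ u ∈ insert (p k) (M.verts \ {p 0}),
      (f u ∈ insert (p k) (M.verts \ {p 0})) ∧ f (f u) = u ∧ G.Adj u (f u) := by
    intro x hxS
    by_cases hx : onP x
    · obtain ⟨j, hj, rfl⟩ := hx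
      have hj0 : j ≠ 0 := by
        rintro rfl
        rcases Set.mem_insert_iff.mp hxS with h | h
        · exact hk0 (hinj 0 (Nat.zero_le _) k le_rfl h).symm
        · exact h.2 rfl
      by_cases hjo : j % 2 = 1
      · -- j odd, so j < k
        have hjk : j < k := by omega
        have hj1 : j + 1 ≤ k := by omega
        rw [f_on j hj, if_neg hj0, if_pos hjo]
        refine ⟨?_, ?_, hadj j hjk⟩
        · by_cases h : j + 1 = k
          · rw [h]; exact Set.mem_insert _ _
          · refine Or.inr ⟨pmem _ (by omega), ?_⟩
            simp only [Set.mem_singleton_iff]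
            intro he
            have := hinj _ hj1 0 (Nat.zero_le _) he
            omega
        · rw [f_on (j + 1) hj1, if_neg (by omega), if_neg (by omega)]
          simp
      · -- j even, ≥ 2
        have hj2 : 2 ≤ j := by omega
        have hj1k : j - 1 < k := by omega
        rw [f_on j hj, if_neg hj0, if_neg hjo]
        refine ⟨Or.inr ⟨pmem _ hj1k, ?_⟩, ?_, ?_⟩
        · simp only [Set.mem_singleton_iff]
          intro he
          have := hinj _ (le_of_lt hj1k) 0 (Nat.zero_le _) he
          omega
        · rw [f_on (j - 1) (by omega), if_neg (by omega), if_pos (by omega),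
            show j - 1 + 1 = j by omega]
        · have := hadj (j - 1) hj1k
          rw [show j - 1 + 1 = j by omega] at this
          exact this.symm
    · -- off path
      have hxm : x ∈ M.verts := by
        rcases Set.mem_insert_iff.mp hxS with h | h
        · exact absurd ⟨k, le_rfl, h.symm⟩ hx
        · exact h.1
      rw [f_off x hx]
      have hpm := mpart_mem hM hxm
      have hoff2 := off_part x hx hxm
      refine ⟨Or.inr ⟨hpm, ?_⟩, ?_, M.adj_sub (mpart_adj hM hxm)⟩
      · simp only [Set.mem_singleton_iff]
        intro he
        exact hoff2 ⟨0, Nat.zero_le _, he.symm⟩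
      · rw [f_off _ hoff2, mpart_invol hM hxm]
  exact exists_matching_of_involution _ f (fun u hu => (key u hu).1)
    (fun u hu => (key u hu).2.1) (fun u hu => (key u hu).2.2)

end Swap

section SwapF

variable {M : G.Subgraph} {p : ℕ → V} {k : ℕ}

open Classical in
/-- Augmenting along an alternating path with `M`-edges at odd positions and
both endpoints unmatched: yields a matching with two more vertices. -/
lemma swapF (hM : M.IsMatching) (hk : k % 2 = 1)
    (hinj : ∀ i ≤ k, ∀ j ≤ k, p i = p j → i = j)
    (hadj : ∀ i < k, G.Adj (p i) (p (i + 1)))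
    (hMadj : ∀ i < k, i % 2 = 1 → M.Adj (p i) (p (i + 1)))
    (hv : p 0 ∉ M.verts) (hu : p k ∉ M.verts) :
    ∃ M' : G.Subgraph, M'.IsMatching ∧
      M'.verts = insert (p 0) (insert (p k) M.verts) := by
  have pmem : ∀ j, 1 ≤ j → j < k → p j ∈ M.verts := by
    intro j hj1 hj
    by_cases hjo : j % 2 = 1
    · exact M.edge_vert (hMadj j hj hjo)
    · have hj1' : j - 1 < k := by omega
      have := hMadj (j - 1) hj1' (by omega)
      rw [show j - 1 + 1 = j by omega] at this
      exact M.edge_vert this.symm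
  have ppart : ∀ j, 1 ≤ j → j < k →
      mpart M (p j) = if j % 2 = 1 then p (j + 1) else p (j - 1) := by
    intro j hj1 hj
    by_cases hjo : j % 2 = 1
    · rw [if_pos hjo]
      exact mpart_eq hM (hMadj j hj hjo)
    · rw [if_neg hjo]
      have hj1' : j - 1 < k := by omega
      have := hMadj (j - 1) hj1' (by omega)
      rw [show j - 1 + 1 = j by omega] at this
      exact mpart_eq hM this.symm
  set onP : V → Prop := fun x => ∃ j, j ≤ k ∧ p j = x with honP
  set f : V → V := fun x =>
    if hx : onP x then
      (if hx.choose % 2 = 0 then p (hx.choose + 1) else p (hx.choose - 1))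
    else mpart M x with hf
  have f_on : ∀ j ≤ k, f (p j) = if j % 2 = 0 then p (j + 1) else p (j - 1) := by
    intro j hj
    have hx : onP (p j) := ⟨j, hj, rfl⟩
    have hj' : hx.choose = j := hinj _ hx.choose_spec.1 _ hj hx.choose_spec.2
    simp only [hf, dif_pos hx, hj']
  have f_off : ∀ x, ¬ onP x → f x = mpart M x := by
    intro x hx
    simp only [hf, dif_neg hx]
  have off_part : ∀ x, ¬ onP x → x ∈ M.verts → ¬ onP (mpart M x) := by
    rintro x hx hxm ⟨j, hj, hj'⟩
    have hj0 : 1 ≤ j := by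
      rcases Nat.eq_zero_or_pos j with rfl | h
      · exact absurd (hj' ▸ mpart_mem hM hxm) hv
      · exact h
    have hjk : j < k := by
      rcases eq_or_lt_of_le hj with rfl | h
      · exact absurd (hj' ▸ mpart_mem hM hxm) hu
      · exact h
    apply hx
    refine ⟨if j % 2 = 1 then j + 1 else j - 1, ?_, ?_⟩
    · split <;> omega
    · have : mpart M (p j) = x := by rw [hj', mpart_invol hM hxm]
      rw [ppart j hj0 hjk] at this
      split <;> rename_i hpar
      · rwa [if_pos hpar] at this
      · rwa [if_neg hpar] at this
  have key : ∀ u ∈ insert (p 0) (insert (p k) M.verts),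
      (f u ∈ insert (p 0) (insert (p k) M.verts)) ∧ f (f u) = u ∧ G.Adj u (f u) := by
    intro x hxS
    by_cases hx : onP x
    · obtain ⟨j, hj, rfl⟩ := hx
      by_cases hje : j % 2 = 0
      · have hjk : j < k := by omega
        have hj1 : j + 1 ≤ k := by omega
        rw [f_on j hj, if_pos hje]
        refine ⟨?_, ?_, hadj j hjk⟩
        · by_cases h : j + 1 = k
          · rw [h]; exact Or.inr (Set.mem_insert _ _)
          · exact Or.inr (Or.inr (pmem _ (by omega) (by omega)))
        · rw [f_on (j + 1) hj1, if_neg (by omega)]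
          simp
      · have hj1 : 1 ≤ j := by omega
        rw [f_on j hj, if_neg hje]
        refine ⟨?_, ?_, ?_⟩
        · by_cases h : j - 1 = 0
          · rw [h]; exact Set.mem_insert _ _
          · exact Or.inr (Or.inr (pmem _ (by omega) (by omega)))
        · rw [f_on (j - 1) (by omega), if_pos (by omega), show j - 1 + 1 = j by omega]
        · have := hadj (j - 1) (by omega)
          rw [show j - 1 + 1 = j by omega] at this
          exact this.symm
    · have hxm : x ∈ M.verts := by
        rcases Set.mem_insert_iff.mp hxS with h | h
        · exact absurd ⟨0, Nat.zero_le _, h.symm⟩ hx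
        · rcases Set.mem_insert_iff.mp h with h' | h'
          · exact absurd ⟨k, le_rfl, h'.symm⟩ hx
          · exact h'
      rw [f_off x hx]
      have hpm := mpart_mem hM hxm
      have hoff2 := off_part x hx hxm
      refine ⟨Or.inr (Or.inr hpm), ?_, M.adj_sub (mpart_adj hM hxm)⟩
      rw [f_off _ hoff2, mpart_invol hM hxm]
  exact exists_matching_of_involution _ f (fun u hu => (key u hu).1)
    (fun u hu => (key u hu).2.1) (fun u hu => (key u hu).2.2)

end SwapF

section Core

variable {M : G.Subgraph} {p : ℕ → V} {k : ℕ}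

/-- Core lemma for the first player's strategy: along a play where the first
player follows the matching `M` (so `M`-edges are at even positions) and the
starting vertex belongs to every maximum matching, at the first player's turn
the current vertex is matched and its partner is unvisited. -/
lemma coreB (hmax : IsMaxMatching G M)
    (hall : ∀ N : G.Subgraph, IsMaxMatching G N → p 0 ∈ N.verts)
    (hk : k % 2 = 0)
    (hinj : ∀ i ≤ k, ∀ j ≤ k, p i = p j → i = j)
    (hadj : ∀ i < k, G.Adj (p i) (p (i + 1)))
    (hMadj : ∀ i < k, i % 2 = 0 → M.Adj (p i) (p (i + 1))) :
    p k ∈ M.verts ∧ ∀ j ≤ k, p j ≠ mpart M (p k) := by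
  have h1 : p k ∈ M.verts := by
    by_contra hu
    rcases Nat.eq_zero_or_pos k with rfl | hk0
    · exact hu (hall M hmax)
    obtain ⟨M', hM', hvts⟩ := swapB hmax.1 hk (by omega) hinj hadj hMadj hu
    have hcard : M'.verts.ncard = M.verts.ncard := by
      rw [hvts]; exact Set.ncard_exchange hu (hall M hmax)
    have hmax' : IsMaxMatching G M' :=
      ⟨hM', fun N hN => hcard ▸ hmax.2 N hN⟩
    have hmem := hall M' hmax'
    rw [hvts] at hmem
    rcases Set.mem_insert_iff.mp hmem with h | h
    · have := hinj 0 (Nat.zero_le _) k le_rfl h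
      omega
    · exact h.2 rfl
  refine ⟨h1, ?_⟩
  intro j hj heq
  by_cases hjk : j = k
  · subst hjk
    have := M.adj_sub (mpart_adj hmax.1 h1)
    rw [← heq] at this
    exact G.irrefl this
  · have hjk' : j < k := lt_of_le_of_ne hj hjk
    have h2 : mpart M (p j) = p k := by rw [heq, mpart_invol hmax.1 h1]
    by_cases hje : j % 2 = 0
    · rw [mpart_eq hmax.1 (hMadj j hjk' hje)] at h2
      have := hinj (j + 1) (by omega) k le_rfl h2
      omega
    · have hM' := hMadj (j - 1) (by omega) (by omega)
      rw [show j - 1 + 1 = j by omega] at hM'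
      rw [mpart_eq hmax.1 hM'.symm] at h2
      have := hinj (j - 1) (by omega) k le_rfl h2
      omega

/-- Core lemma for the second player's strategy: along a play where the second
player follows the matching `M` (so `M`-edges are at odd positions) and the
starting vertex is exposed by `M`, at the second player's turn the current
vertex is matched and its partner is unvisited. -/
lemma coreF [Finite V] (hmax : IsMaxMatching G M) (hv : p 0 ∉ M.verts)
    (hk : k % 2 = 1)
    (hinj : ∀ i ≤ k, ∀ j ≤ k, p i = p j → i = j)
    (hadj : ∀ i < k, G.Adj (p i) (p (i + 1)))
    (hMadj : ∀ i < k, i % 2 = 1 → M.Adj (p i) (p (i + 1))) :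
    p k ∈ M.verts ∧ ∀ j ≤ k, p j ≠ mpart M (p k) := by
  have h1 : p k ∈ M.verts := by
    by_contra hu
    obtain ⟨M', hM', hvts⟩ := swapF hmax.1 hk hinj hadj hMadj hv hu
    have h0k : p 0 ∉ insert (p k) M.verts := by
      rintro (h | h)
      · have := hinj 0 (Nat.zero_le _) k le_rfl h
        omega
      · exact hv h
    have hcard : M'.verts.ncard = M.verts.ncard + 2 := by
      rw [hvts, Set.ncard_insert_of_notMem h0k (Set.toFinite _),
        Set.ncard_insert_of_notMem hu (Set.toFinite _)]
    have := hmax.2 M' hM'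
    omega
  refine ⟨h1, ?_⟩
  intro j hj heq
  by_cases hjk : j = k
  · subst hjk
    have := M.adj_sub (mpart_adj hmax.1 h1)
    rw [← heq] at this
    exact G.irrefl this
  · have hjk' : j < k := lt_of_le_of_ne hj hjk
    rcases Nat.eq_zero_or_pos j with rfl | hj0
    · exact hv (heq ▸ mpart_mem hmax.1 h1)
    have h2 : mpart M (p j) = p k := by rw [heq, mpart_invol hmax.1 h1]
    by_cases hjo : j % 2 = 1
    · rw [mpart_eq hmax.1 (hMadj j hjk' hjo)] at h2
      have := hinj (j + 1) (by omega) k le_rfl h2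
      omega
    · have hM' := hMadj (j - 1) (by omega) (by omega)
      rw [show j - 1 + 1 = j by omega] at hM'
      rw [mpart_eq hmax.1 hM'.symm] at h2
      have := hinj (j - 1) (by omega) k le_rfl h2
      omega

end Core

section Paths

variable {M : G.Subgraph} {v : V}

/-- The history `h` (newest first, starting vertex `v`) is a good alternating
play: consecutive vertices adjacent, no repeats, and `M`-edges at all
positions congruent to `ε` mod 2 (counting from the start of the play). -/
def GoodPath (G : SimpleGraph V) (M : G.Subgraph) (v : V) (ε : ℕ) (h : List V) : Prop :=
  h ≠ [] ∧ h.Nodup ∧ h.reverse.getD 0 v = v ∧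
  (∀ i, i + 1 < h.length → G.Adj (h.reverse.getD i v) (h.reverse.getD (i + 1) v)) ∧
  (∀ i, i + 1 < h.length → i % 2 = ε →
    M.Adj (h.reverse.getD i v) (h.reverse.getD (i + 1) v))

lemma goodPath_init (ε : ℕ) : GoodPath G M v ε [v] := by
  refine ⟨by simp, by simp, by simp, ?_, ?_⟩ <;> intro i hi <;> simp at hi

lemma head_eq_getD {h : List V} (hne : h ≠ []) :
    h.head? = some (h.reverse.getD (h.length - 1) v) := by
  cases h with
  | nil => exact absurd rfl hne
  | cons c t =>
    simp only [List.head?_cons, List.reverse_cons, List.length_cons,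
      Nat.add_sub_cancel]
    rw [List.getD_append_right _ _ _ _ (by simp), List.length_reverse]
    simp

lemma mem_iff_getD {h : List V} {x : V} (hx : x ∈ h) :
    ∃ j ≤ h.length - 1, h.reverse.getD j v = x := by
  have hx' : x ∈ h.reverse := List.mem_reverse.mpr hx
  obtain ⟨j, hj, hjx⟩ := List.getElem_of_mem hx'
  rw [List.length_reverse] at hj
  refine ⟨j, by omega, ?_⟩
  rw [List.getD_eq_getElem _ _ (by rwa [List.length_reverse]), hjx]

lemma nodup_inj {h : List V} (hn : h.Nodup) :
    ∀ i ≤ h.length - 1, ∀ j ≤ h.length - 1,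
      h.reverse.getD i v = h.reverse.getD j v → i = j := by
  intro i hi j hj hij
  by_cases hne : h = []
  · subst hne; simp at hi hj; omega
  have hlen : 1 ≤ h.length := List.length_pos_iff.mpr hne
  have hi' : i < h.reverse.length := by rw [List.length_reverse]; omega
  have hj' : j < h.reverse.length := by rw [List.length_reverse]; omega
  rw [List.getD_eq_getElem _ _ hi', List.getD_eq_getElem _ _ hj'] at hij
  have := List.nodup_iff_injective_getElem.mp (List.nodup_reverse.mpr hn)
  have := @this ⟨i, hi'⟩ ⟨j, hj'⟩ hij
  simpa using this

lemma goodPath_extend {ε : ℕ} {h : List V} {c w : V} (hg : GoodPath G M v ε h)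
    (hc : h.head? = some c) (hw : w ∉ h) (hadj : G.Adj c w)
    (hM : (h.length - 1) % 2 = ε → M.Adj c w) :
    GoodPath G M v ε (w :: h) := by
  obtain ⟨hne, hnd, h0, hadj', hM'⟩ := hg
  have hlen : 1 ≤ h.length := List.length_pos_iff.mpr hne
  have hrl : h.reverse.length = h.length := List.length_reverse
  have hgd : ∀ i < h.length, (w :: h).reverse.getD i v = h.reverse.getD i v := by
    intro i hi
    rw [List.reverse_cons, List.getD_append _ _ _ _ (by omega)]
  have hgd' : (w :: h).reverse.getD h.length v = w := by
    rw [List.reverse_cons, List.getD_append_right _ _ _ _ (by omega)]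
    simp [hrl]
  have hcval : c = h.reverse.getD (h.length - 1) v := by
    have := head_eq_getD (v := v) hne
    rw [hc] at this
    exact Option.some_injective _ this
  refine ⟨List.cons_ne_nil _ _, List.nodup_cons.mpr ⟨hw, hnd⟩, ?_, ?_, ?_⟩
  · rw [hgd 0 (by omega)]; exact h0
  · intro i hi
    simp only [List.length_cons] at hi
    by_cases hi' : i + 1 < h.length
    · rw [hgd i (by omega), hgd (i + 1) hi']
      exact hadj' i hi'
    · have : i + 1 = h.length := by omega
      rw [hgd i (by omega), this, hgd', show i = h.length - 1 by omega, ← hcval]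
      exact hadj
  · intro i hi hpar
    simp only [List.length_cons] at hi
    by_cases hi' : i + 1 < h.length
    · rw [hgd i (by omega), hgd (i + 1) hi']
      exact hM' i hi' hpar
    · have : i + 1 = h.length := by omega
      rw [hgd i (by omega), this, hgd', show i = h.length - 1 by omega, ← hcval]
      exact hM (by omega)

/-- Package a good path for the core lemmas. -/
lemma goodPath_head_matched_B (hmax : IsMaxMatching G M)
    (hall : ∀ N : G.Subgraph, IsMaxMatching G N → v ∈ N.verts)
    {h : List V} (hg : GoodPath G M v 0 h) (hpar : (h.length - 1) % 2 = 0) :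
    ∃ c, h.head? = some c ∧ c ∈ M.verts ∧ mpart M c ∉ h := by
  obtain ⟨hne, hnd, h0, hadj', hM'⟩ := hg
  have hlen : 1 ≤ h.length := List.length_pos_iff.mpr hne
  set p : ℕ → V := fun i => h.reverse.getD i v with hp
  set k := h.length - 1 with hk
  have hcore := coreB (p := p) (k := k) hmax (by rw [show p 0 = v from h0]; exact hall)
    hpar (nodup_inj hnd) (fun i hi => hadj' i (by omega)) (fun i hi => hM' i (by omega))
  refine ⟨p k, ?_, hcore.1, ?_⟩
  · exact head_eq_getD hne
  · intro hmem
    obtain ⟨j, hj, hjx⟩ := mem_iff_getD hmem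
    exact hcore.2 j hj hjx

lemma goodPath_head_matched_F [Finite V] (hmax : IsMaxMatching G M)
    (hv : v ∉ M.verts)
    {h : List V} (hg : GoodPath G M v 1 h) (hpar : (h.length - 1) % 2 = 1) :
    ∃ c, h.head? = some c ∧ c ∈ M.verts ∧ mpart M c ∉ h := by
  obtain ⟨hne, hnd, h0, hadj', hM'⟩ := hg
  have hlen : 1 ≤ h.length := List.length_pos_iff.mpr hne
  set p : ℕ → V := fun i => h.reverse.getD i v with hp
  set k := h.length - 1 with hk
  have hcore := coreF (p := p) (k := k) hmax (by rwa [show p 0 = v from h0])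
    hpar (nodup_inj hnd) (fun i hi => hadj' i (by omega)) (fun i hi => hM' i (by omega))
  refine ⟨p k, ?_, hcore.1, ?_⟩
  · exact head_eq_getD hne
  · intro hmem
    obtain ⟨j, hj, hjx⟩ := mem_iff_getD hmem
    exact hcore.2 j hj hjx

end Paths
section Game

open Classical in
lemma trapPlay_succ (A : Set V) (σ τ : List V → V) (v : V) (n : ℕ) :
    trapPlay G A σ τ v (n + 1) =
      if TrapLegal G A (trapPlay G A σ τ v n)
          (if (trapPlay G A σ τ v n).length % 2 = 1 then σ (trapPlay G A σ τ v n)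
            else τ (trapPlay G A σ τ v n))
        then (if (trapPlay G A σ τ v n).length % 2 = 1 then σ (trapPlay G A σ τ v n)
            else τ (trapPlay G A σ τ v n)) :: trapPlay G A σ τ v n
        else trapPlay G A σ τ v n := rfl

/-- The matching-following strategy. -/
noncomputable def mstrat (M : G.Subgraph) (v : V) : List V → V
  | [] => v
  | c :: _ => mpart M c

lemma mstrat_eq {M : G.Subgraph} {v c : V} {h : List V} (hc : h.head? = some c) :
    mstrat M v h = mpart M c := by
  cases h with
  | nil => simp at hc
  | cons a t =>
    simp only [List.head?_cons, Option.some.injEq] at hc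
    subst hc; rfl

variable {M : G.Subgraph} {v : V}

/-- If `v` is in every maximum matching then the first player wins. -/
lemma firstWins [Fintype V]
    (hall : ∀ N : G.Subgraph, IsMaxMatching G N → v ∈ N.verts) :
    TrapFirstWins G Set.univ v := by
  classical
  obtain ⟨M, hmax⟩ := exists_maxMatching G
  refine ⟨mstrat M v, fun τ => ?_⟩
  by_contra hcon
  push_neg at hcon
  -- hcon : ∀ n, length even → τ's move is legal
  have key : ∀ n, GoodPath G M v 0 (trapPlay G Set.univ (mstrat M v) τ v n) ∧
      (trapPlay G Set.univ (mstrat M v) τ v n).length = n + 1 := by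
    intro n
    induction n with
    | zero => exact ⟨goodPath_init 0, rfl⟩
    | succ n ih =>
      obtain ⟨hg, hlen⟩ := ih
      set h := trapPlay G Set.univ (mstrat M v) τ v n with hh
      by_cases hpar : h.length % 2 = 1
      · -- first player's turn: strategy move is legal
        obtain ⟨c, hc, hcm, hcup⟩ := goodPath_head_matched_B hmax hall hg (by omega)
        have hlegal : TrapLegal G Set.univ h (mstrat M v h) := by
          rw [mstrat_eq hc]
          exact ⟨c, hc, M.adj_sub (mpart_adj hmax.1 hcm), hcup, trivial⟩
        rw [trapPlay_succ, ← hh, if_pos hpar, if_pos hlegal]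
        refine ⟨?_, by simp [hlen]⟩
        refine goodPath_extend hg hc ?_ ?_ ?_ <;> rw [mstrat_eq hc]
        · exact hcup
        · exact M.adj_sub (mpart_adj hmax.1 hcm)
        · intro _; exact mpart_adj hmax.1 hcm
      · -- second player's turn: τ's move is legal by assumption
        have hev : h.length % 2 = 0 := by omega
        have hlegal := hcon n hev
        rw [← hh] at hlegal
        obtain ⟨c, hc, hcadj, hcnm, -⟩ := hlegal
        rw [trapPlay_succ, ← hh, if_neg hpar, if_pos (hcon n hev)]
        refine ⟨?_, by simp [hlen]⟩
        refine goodPath_extend hg hc hcnm hcadj ?_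
        intro hparr
        omega
  have h1 := (key (Fintype.card V)).2
  have h2 := ((key (Fintype.card V)).1).2.1.length_le_card
  omega

/-- If `v` is missed by the maximum matching `M` then the second player,
following `M`, always has a legal reply. -/
lemma secondDefends [Fintype V] (hmax : IsMaxMatching G M) (hv : v ∉ M.verts)
    (σ : List V → V) :
    ∀ n, GoodPath G M v 1 (trapPlay G Set.univ σ (mstrat M v) v n) ∧
      ((trapPlay G Set.univ σ (mstrat M v) v n).length % 2 = 0 →
        TrapLegal G Set.univ (trapPlay G Set.univ σ (mstrat M v) v n)
          (mstrat M v (trapPlay G Set.univ σ (mstrat M v) v n))) := by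
  classical
  intro n
  induction n with
  | zero =>
    refine ⟨goodPath_init 1, ?_⟩
    intro h0
    simp [trapPlay] at h0
  | succ n ih =>
    obtain ⟨hg, hleg⟩ := ih
    set h := trapPlay G Set.univ σ (mstrat M v) v n with hh
    have hne : h ≠ [] := hg.1
    have hlen : 1 ≤ h.length := List.length_pos_iff.mpr hne
    -- helper establishing the two goals for any good successor history
    have finish : ∀ h' : List V, GoodPath G M v 1 h' →
        (GoodPath G M v 1 h' ∧ (h'.length % 2 = 0 →
          TrapLegal G Set.univ h' (mstrat M v h'))) := by
      intro h' hg'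
      refine ⟨hg', fun hev => ?_⟩
      have hlen' : 1 ≤ h'.length := List.length_pos_iff.mpr hg'.1
      obtain ⟨c, hc, hcm, hcup⟩ :=
        goodPath_head_matched_F hmax hv hg' (by omega)
      rw [mstrat_eq hc]
      exact ⟨c, hc, M.adj_sub (mpart_adj hmax.1 hcm), hcup, trivial⟩
    by_cases hpar : h.length % 2 = 1
    · -- first player's move
      by_cases hlegal : TrapLegal G Set.univ h (σ h)
      · rw [trapPlay_succ, ← hh, if_pos hpar, if_pos hlegal]
        obtain ⟨c, hc, hcadj, hcnm, -⟩ := hlegal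
        refine finish _ (goodPath_extend hg hc hcnm hcadj ?_)
        intro hparr
        omega
      · rw [trapPlay_succ, ← hh, if_pos hpar, if_neg hlegal]
        exact ⟨hg, fun hev => by omega⟩
    · -- second player's move: legal by induction hypothesis
      have hev : h.length % 2 = 0 := by omega
      have hlegal := hleg hev
      rw [trapPlay_succ, ← hh, if_neg hpar, if_pos hlegal]
      obtain ⟨c, hc, hcm, hcup⟩ := goodPath_head_matched_F hmax hv hg (by omega)
      refine finish _ (goodPath_extend hg hc ?_ ?_ ?_) <;> rw [mstrat_eq hc]
      · exact hcup
      · exact M.adj_sub (mpart_adj hmax.1 hcm)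
      · intro _; exact mpart_adj hmax.1 hcm

end Game


end Aux

/-- On a finite connected simple graph, the first player wins
Trap from `v` if and only if `v` is contained in every maximum matching. -/
theorem trap_firstWins_iff_mem_every_maxMatching [Fintype V]
    (G : SimpleGraph V) (hG : G.Connected) (v : V) :
    TrapFirstWins G Set.univ v ↔
      ∀ M : G.Subgraph, IsMaxMatching G M → v ∈ M.verts := by
  constructor
  · intro hwin M hmax
    by_contra hv
    obtain ⟨σ, hσ⟩ := hwin
    obtain ⟨n, hev, hnl⟩ := hσ (mstrat M v)
    exact hnl ((secondDefends hmax hv σ n).2 hev)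
  · exact firstWins
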